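/- The split S = {x ∈ ℝ² : 0 ≤ x₂ ≤ 1} is lattice-free (its interior contains no integer point), and for any sequence of lattice-free convex bodies approximating it, the value p(K) − 4R(K) approaches 2; concretely, for K_n = [−n,n] × [0,1], p(K_n) − 4R(K_n) = 4n + 2 − 2√(4n²+1) → 2 as n → ∞. -/

import Mathlib

open MeasureTheory Metric Set Filter
open scoped Topology RealInnerProductSpace

noncomputable def perim (K : Set (EuclideanSpace ℝ (Fin 2))) : ℝ :=
  (μH[1] (frontier K)).toReal

noncomputable def circum (K : Set (EuclideanSpace ℝ (Fin 2))) : ℝ :=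
  sInf {r : ℝ | ∃ c, K ⊆ Metric.closedBall c r}

noncomputable def inrad (K : Set (EuclideanSpace ℝ (Fin 2))) : ℝ :=
  sSup {r : ℝ | ∃ c, Metric.closedBall c r ⊆ K}

noncomputable def minWidth (K : Set (EuclideanSpace ℝ (Fin 2))) : ℝ :=
  sInf {w : ℝ | ∃ u : EuclideanSpace ℝ (Fin 2), ‖u‖ = 1 ∧
    w = sSup ((fun x => ⟪u, x⟫) '' K) - sInf ((fun x => ⟪u, x⟫) '' K)}

def LatticeFree (K : Set (EuclideanSpace ℝ (Fin 2))) : Prop :=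
  ∀ m n : ℤ, (WithLp.toLp 2 ![(m : ℝ), (n : ℝ)] : EuclideanSpace ℝ (Fin 2)) ∉ interior K

def Unconditional (K : Set (EuclideanSpace ℝ (Fin 2))) (z : EuclideanSpace ℝ (Fin 2)) : Prop :=
  (∀ x ∈ K, (WithLp.toLp 2 ![x 0, 2 * z 1 - x 1] : EuclideanSpace ℝ (Fin 2)) ∈ K) ∧
  (∀ x ∈ K, (WithLp.toLp 2 ![2 * z 0 - x 0, x 1] : EuclideanSpace ℝ (Fin 2)) ∈ K)

noncomputable def hmap (c : ℝ) : ℝ → EuclideanSpace ℝ (Fin 2) := fun t => WithLp.toLp 2 ![t, c]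
noncomputable def vmap (c : ℝ) : ℝ → EuclideanSpace ℝ (Fin 2) := fun t => WithLp.toLp 2 ![c, t]

lemma hmap_isom (c : ℝ) : Isometry (hmap c) := by
  apply Isometry.of_dist_eq
  intro s t
  rw [show hmap c s = (WithLp.toLp 2 ![s, c] : EuclideanSpace ℝ (Fin 2)) from rfl,
      show hmap c t = (WithLp.toLp 2 ![t, c] : EuclideanSpace ℝ (Fin 2)) from rfl,
      EuclideanSpace.dist_eq]
  simp [Fin.sum_univ_two, Real.dist_eq, Real.sqrt_sq_eq_abs]

lemma vmap_isom (c : ℝ) : Isometry (vmap c) := by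
  apply Isometry.of_dist_eq
  intro s t
  rw [show vmap c s = (WithLp.toLp 2 ![c, s] : EuclideanSpace ℝ (Fin 2)) from rfl,
      show vmap c t = (WithLp.toLp 2 ![c, t] : EuclideanSpace ℝ (Fin 2)) from rfl,
      EuclideanSpace.dist_eq]
  simp [Fin.sum_univ_two, Real.dist_eq, Real.sqrt_sq_eq_abs]

lemma himg (c a b : ℝ) : μH[1] (hmap c '' Icc a b) = ENNReal.ofReal (b - a) := by
  rw [(hmap_isom c).hausdorffMeasure_image (Or.inl one_pos.le), hausdorffMeasure_real,
    Real.volume_Icc]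

lemma interior_coord_lt {A : Set (EuclideanSpace ℝ (Fin 2))} {x : EuclideanSpace ℝ (Fin 2)}
    (hx : x ∈ interior A) (i : Fin 2) {c : ℝ} (hc : ∀ y ∈ A, y i ≤ c) : x i < c := by
  obtain ⟨ε, hε, hball⟩ := Metric.isOpen_iff.1 isOpen_interior x hx
  have hy : x + (ε/2) • EuclideanSpace.single i (1:ℝ) ∈ A := by
    apply interior_subset
    apply hball
    rw [Metric.mem_ball, dist_eq_norm, add_sub_cancel_left, norm_smul,
      EuclideanSpace.norm_single]
    rw [Real.norm_eq_abs, Real.norm_eq_abs, abs_one, mul_one, abs_of_pos (half_pos hε)]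
    linarith
  have := hc _ hy
  have h2 : (x + (ε/2) • EuclideanSpace.single i (1:ℝ)) i = x i + ε/2 := by
    simp [EuclideanSpace.single_apply]
  rw [h2] at this
  linarith

lemma interior_coord_gt {A : Set (EuclideanSpace ℝ (Fin 2))} {x : EuclideanSpace ℝ (Fin 2)}
    (hx : x ∈ interior A) (i : Fin 2) {c : ℝ} (hc : ∀ y ∈ A, c ≤ y i) : c < x i := by
  obtain ⟨ε, hε, hball⟩ := Metric.isOpen_iff.1 isOpen_interior x hx
  have hy : x - (ε/2) • EuclideanSpace.single i (1:ℝ) ∈ A := by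
    apply interior_subset
    apply hball
    rw [Metric.mem_ball, dist_eq_norm, sub_sub_cancel_left, norm_neg, norm_smul,
      EuclideanSpace.norm_single]
    rw [Real.norm_eq_abs, Real.norm_eq_abs, abs_one, mul_one, abs_of_pos (half_pos hε)]
    linarith
  have := hc _ hy
  have h2 : (x - (ε/2) • EuclideanSpace.single i (1:ℝ)) i = x i - ε/2 := by
    simp [EuclideanSpace.single_apply]
  rw [h2] at this
  linarith

lemma mem_himg {c : ℝ} {s : Set ℝ} {x : EuclideanSpace ℝ (Fin 2)} :
    x ∈ hmap c '' s ↔ x 0 ∈ s ∧ x 1 = c := by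
  constructor
  · rintro ⟨t, ht, rfl⟩
    exact ⟨ht, rfl⟩
  · rintro ⟨h0, h1⟩
    refine ⟨x 0, h0, ?_⟩
    ext i
    fin_cases i
    · rfl
    · exact h1.symm

lemma mem_vimg {c : ℝ} {s : Set ℝ} {x : EuclideanSpace ℝ (Fin 2)} :
    x ∈ vmap c '' s ↔ x 0 = c ∧ x 1 ∈ s := by
  constructor
  · rintro ⟨t, ht, rfl⟩
    exact ⟨rfl, ht⟩
  · rintro ⟨h0, h1⟩
    refine ⟨x 1, h1, ?_⟩
    ext i
    fin_cases i
    · exact h0.symm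
    · rfl

lemma cont_apply (i : Fin 2) : Continuous (fun x : EuclideanSpace ℝ (Fin 2) => x i) := by
  exact (EuclideanSpace.proj i).continuous

lemma interior_rect {a b : ℝ} :
    interior {x : EuclideanSpace ℝ (Fin 2) | x 0 ∈ Icc a b ∧ x 1 ∈ Icc (0:ℝ) 1} =
      {x | x 0 ∈ Ioo a b ∧ x 1 ∈ Ioo (0:ℝ) 1} := by
  apply Subset.antisymm
  · intro x hx
    have hxR := interior_subset hx
    refine ⟨⟨?_, ?_⟩, ?_, ?_⟩
    · exact interior_coord_gt hx 0 (fun y hy => hy.1.1)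
    · exact interior_coord_lt hx 0 (fun y hy => hy.1.2)
    · exact interior_coord_gt hx 1 (fun y hy => hy.2.1)
    · exact interior_coord_lt hx 1 (fun y hy => hy.2.2)
  · apply interior_maximal
    · rintro x ⟨h0, h1⟩
      exact ⟨⟨h0.1.le, h0.2.le⟩, ⟨h1.1.le, h1.2.le⟩⟩
    · exact ((isOpen_Ioo.preimage (cont_apply 0)).inter (isOpen_Ioo.preimage (cont_apply 1)))

lemma closed_rect {a b : ℝ} :
    IsClosed {x : EuclideanSpace ℝ (Fin 2) | x 0 ∈ Icc a b ∧ x 1 ∈ Icc (0:ℝ) 1} :=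
  (isClosed_Icc.preimage (cont_apply 0)).inter (isClosed_Icc.preimage (cont_apply 1))

lemma frontier_rect {a b : ℝ} (hab : a < b) :
    frontier {x : EuclideanSpace ℝ (Fin 2) | x 0 ∈ Icc a b ∧ x 1 ∈ Icc (0:ℝ) 1} =
      (hmap 0 '' Icc a b ∪ hmap 1 '' Icc a b) ∪ (vmap a '' Icc (0:ℝ) 1 ∪ vmap b '' Icc (0:ℝ) 1) := by
  rw [closed_rect.frontier_eq, interior_rect]
  ext x
  simp only [mem_diff, mem_setOf_eq, mem_union, mem_himg, mem_vimg, mem_Icc, mem_Ioo]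
  constructor
  · rintro ⟨⟨⟨ha, hb⟩, ⟨h0, h1⟩⟩, hni⟩
    push_neg at hni
    by_cases hx1 : x 1 = 0
    · exact Or.inl (Or.inl ⟨⟨ha, hb⟩, hx1⟩)
    by_cases hx1' : x 1 = 1
    · exact Or.inl (Or.inr ⟨⟨ha, hb⟩, hx1'⟩)
    by_cases hxa : x 0 = a
    · exact Or.inr (Or.inl ⟨hxa, h0, h1⟩)
    by_cases hxb : x 0 = b
    · exact Or.inr (Or.inr ⟨hxb, h0, h1⟩)
    · exact absurd (hni ⟨lt_of_le_of_ne ha (Ne.symm hxa), lt_of_le_of_ne hb hxb⟩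
        (lt_of_le_of_ne h0 (Ne.symm hx1))) (not_le.2 (lt_of_le_of_ne h1 hx1'))
  · rintro ((⟨⟨ha, hb⟩, h1⟩ | ⟨⟨ha, hb⟩, h1⟩) | (⟨h0, ha, hb⟩ | ⟨h0, ha, hb⟩))
    · exact ⟨⟨⟨ha, hb⟩, by rw [h1]; constructor <;> norm_num⟩, fun h => by rw [h1] at h; exact absurd h.2.1 (lt_irrefl 0)⟩
    · exact ⟨⟨⟨ha, hb⟩, by rw [h1]; constructor <;> norm_num⟩, fun h => by rw [h1] at h; exact absurd h.2.2 (lt_irrefl 1)⟩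
    · exact ⟨⟨by rw [h0]; exact ⟨le_refl a, hab.le⟩, ⟨ha, hb⟩⟩, fun h => by rw [h0] at h; exact absurd h.1.1 (lt_irrefl a)⟩
    · exact ⟨⟨by rw [h0]; exact ⟨hab.le, le_refl b⟩, ⟨ha, hb⟩⟩, fun h => by rw [h0] at h; exact absurd h.1.2 (lt_irrefl b)⟩

lemma vimg_meas (c a b : ℝ) : μH[1] (vmap c '' Icc a b) = ENNReal.ofReal (b - a) := by
  rw [(vmap_isom c).hausdorffMeasure_image (Or.inl one_pos.le), hausdorffMeasure_real,
    Real.volume_Icc]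

lemma hsingleton (p : EuclideanSpace ℝ (Fin 2)) : μH[1] ({p} : Set (EuclideanSpace ℝ (Fin 2))) = 0 := by
  have := hausdorffMeasure_segment p p
  rwa [segment_same, edist_self] at this

lemma perim_rect {a b : ℝ} (hab : a < b) :
    μH[1] (frontier {x : EuclideanSpace ℝ (Fin 2) | x 0 ∈ Icc a b ∧ x 1 ∈ Icc (0:ℝ) 1}) =
      ENNReal.ofReal (b - a) + ENNReal.ofReal (b - a) + 1 + 1 := by
  rw [frontier_rect hab]
  have hmeas : ∀ c : ℝ, ∀ s t : ℝ, MeasurableSet (hmap c '' Icc s t) :=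
    fun c s t => ((isCompact_Icc.image (hmap_isom c).continuous).isClosed).measurableSet
  have vmeas : ∀ c : ℝ, ∀ s t : ℝ, MeasurableSet (vmap c '' Icc s t) :=
    fun c s t => ((isCompact_Icc.image (vmap_isom c).continuous).isClosed).measurableSet
  have hd : Disjoint (hmap 0 '' Icc a b) (hmap 1 '' Icc a b) := by
    rw [Set.disjoint_left]
    rintro x hx0 hx1
    rw [mem_himg] at hx0 hx1
    rw [hx0.2] at hx1
    exact one_ne_zero hx1.2.symm
  have vd : Disjoint (vmap a '' Icc (0:ℝ) 1) (vmap b '' Icc (0:ℝ) 1) := by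
    rw [Set.disjoint_left]
    rintro x hx0 hx1
    rw [mem_vimg] at hx0 hx1
    exact hab.ne (hx0.1.symm.trans hx1.1)
  have hcross : μH[1] ((hmap 0 '' Icc a b ∪ hmap 1 '' Icc a b) ∩
      (vmap a '' Icc (0:ℝ) 1 ∪ vmap b '' Icc (0:ℝ) 1)) = 0 := by
    have hsub : (hmap 0 '' Icc a b ∪ hmap 1 '' Icc a b) ∩
        (vmap a '' Icc (0:ℝ) 1 ∪ vmap b '' Icc (0:ℝ) 1) ⊆
        ({WithLp.toLp 2 ![a,0], WithLp.toLp 2 ![b,0], WithLp.toLp 2 ![a,1], WithLp.toLp 2 ![b,1]} : Set (EuclideanSpace ℝ (Fin 2))) := by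
      rintro x ⟨hH, hV⟩
      have hx1 : x 1 = 0 ∨ x 1 = 1 := by
        rcases hH with h | h <;> rw [mem_himg] at h
        · exact Or.inl h.2
        · exact Or.inr h.2
      have hx0 : x 0 = a ∨ x 0 = b := by
        rcases hV with h | h <;> rw [mem_vimg] at h
        · exact Or.inl h.1
        · exact Or.inr h.1
      have hx : x = WithLp.toLp 2 ![x 0, x 1] := by
        ext i; fin_cases i <;> rfl
      rcases hx0 with h0 | h0 <;> rcases hx1 with h1 | h1 <;>
        rw [h0, h1] at hx <;> simp [hx]
    apply measure_mono_null hsub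
    simp only [Set.insert_eq]
    exact measure_union_null (hsingleton _) (measure_union_null (hsingleton _)
      (measure_union_null (hsingleton _) (hsingleton _)))
  rw [measure_union₀ (((vmeas a 0 1).union (vmeas b 0 1)).nullMeasurableSet)
      hcross,
    measure_union hd (hmeas 1 a b), measure_union vd (vmeas b 0 1),
    himg, himg, vimg_meas, vimg_meas]
  norm_num
  ring

def ept (a b : ℝ) : EuclideanSpace ℝ (Fin 2) := WithLp.toLp 2 ![a, b]

lemma circum_rect {n : ℝ} (hn : 0 ≤ n) :
    circum {x : EuclideanSpace ℝ (Fin 2) | x 0 ∈ Icc (-n) n ∧ x 1 ∈ Icc (0:ℝ) 1} =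
      Real.sqrt (4 * n ^ 2 + 1) / 2 := by
  set R := Real.sqrt (4 * n ^ 2 + 1) / 2 with hR
  set Kn := {x : EuclideanSpace ℝ (Fin 2) | x 0 ∈ Icc (-n) n ∧ x 1 ∈ Icc (0:ℝ) 1}
  have hRsq : R ^ 2 = (4 * n ^ 2 + 1) / 4 := by
    rw [hR, div_pow, Real.sq_sqrt (by positivity)]
    norm_num
  have hRpos : 0 ≤ R := by positivity
  have hmem : R ∈ {r : ℝ | ∃ c, Kn ⊆ Metric.closedBall c r} := by
    refine ⟨ept 0 (1/2), fun x hx => ?_⟩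
    rw [Metric.mem_closedBall]
    rw [EuclideanSpace.dist_eq (𝕜 := ℝ) (n := Fin 2), ← Real.sqrt_sq hRpos]
    apply Real.sqrt_le_sqrt
    obtain ⟨⟨h1, h2⟩, h3, h4⟩ := hx
    rw [hRsq]
    have e0 : ept 0 (1/2) 0 = 0 := rfl
    have e1 : ept 0 (1/2) 1 = 1/2 := rfl
    rw [Fin.sum_univ_two, e0, e1, Real.dist_eq, Real.dist_eq, sub_zero, sq_abs, sq_abs]
    have hx0 : x 0 ^ 2 ≤ n ^ 2 := sq_le_sq' (by linarith) h2
    have hx1 : (x 1 - 1/2) ^ 2 ≤ (1/2) ^ 2 := sq_le_sq' (by linarith) (by linarith)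
    nlinarith
  have hlb : ∀ r ∈ {r : ℝ | ∃ c, Kn ⊆ Metric.closedBall c r}, R ≤ r := by
    rintro r ⟨c, hc⟩
    have hp : ept (-n) 0 ∈ Kn := by
      refine ⟨⟨le_refl _, ?_⟩, le_refl _, ?_⟩
      · show -n ≤ n; linarith
      · show (0:ℝ) ≤ 1; norm_num
    have hq : ept n 1 ∈ Kn := by
      refine ⟨⟨?_, le_refl _⟩, ?_, le_refl _⟩
      · show -n ≤ n; linarith
      · show (0:ℝ) ≤ 1; norm_num
    have hpq : dist (ept (-n) 0) (ept n 1) = Real.sqrt (4 * n ^ 2 + 1) := by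
      rw [EuclideanSpace.dist_eq (𝕜 := ℝ) (n := Fin 2)]
      congr 1
      rw [Fin.sum_univ_two]
      have e0 : dist (ept (-n) 0 0) (ept n 1 0) = |(-n) - n| := rfl
      have e1 : dist (ept (-n) 0 1) (ept n 1 1) = |(0:ℝ) - 1| := rfl
      rw [e0, e1, sq_abs, sq_abs]
      ring
    have h2r : Real.sqrt (4 * n ^ 2 + 1) ≤ 2 * r := by
      calc Real.sqrt (4 * n ^ 2 + 1) = dist (ept (-n) 0) (ept n 1) := hpq.symm
        _ ≤ dist (ept (-n) 0) c + dist c (ept n 1) := dist_triangle _ _ _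
        _ ≤ r + r := add_le_add (Metric.mem_closedBall.1 (hc hp))
            (by rw [dist_comm]; exact Metric.mem_closedBall.1 (hc hq))
        _ = 2 * r := by ring
    rw [hR]; linarith
  exact le_antisymm (csInf_le ⟨R, hlb⟩ hmem) (le_csInf ⟨R, hmem⟩ hlb)

theorem stmt_18 (S : Set (EuclideanSpace ℝ (Fin 2)))
    (hS : S = {x | 0 ≤ x 1 ∧ x 1 ≤ 1})
    (K : ℕ → Set (EuclideanSpace ℝ (Fin 2)))
    (hK : ∀ n, K n = {x | x 0 ∈ Icc (-(n : ℝ)) (n : ℝ) ∧ x 1 ∈ Icc (0 : ℝ) 1}) :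
    LatticeFree S ∧
      (∀ n : ℕ, 1 ≤ n →
        perim (K n) - 4 * circum (K n) =
          4 * (n : ℝ) + 2 - 2 * Real.sqrt (4 * (n : ℝ) ^ 2 + 1)) ∧
      Tendsto (fun n : ℕ => perim (K n) - 4 * circum (K n)) atTop (𝓝 2) := by
  have hLF : LatticeFree S := by
    intro m k hx
    rw [hS] at hx
    have hlt := interior_coord_lt hx 1 (fun y hy => hy.2)
    have hgt := interior_coord_gt hx 1 (fun y hy => hy.1)
    have e1 : (WithLp.toLp 2 ![(m:ℝ), (k:ℝ)] : EuclideanSpace ℝ (Fin 2)) 1 = (k:ℝ) := rfl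
    rw [e1] at hlt hgt
    have hk0 : (0:ℤ) < k := by exact_mod_cast hgt
    have hk1 : (1:ℤ) ≤ k := hk0
    have : (1:ℝ) ≤ (k:ℝ) := by exact_mod_cast hk1
    linarith
  have key : ∀ n : ℕ, 1 ≤ n →
      perim (K n) - 4 * circum (K n) = 4 * (n : ℝ) + 2 - 2 * Real.sqrt (4 * (n : ℝ) ^ 2 + 1) := by
    intro n hn
    have hn1 : (1:ℝ) ≤ (n:ℝ) := by exact_mod_cast hn
    have hab : -(n:ℝ) < (n:ℝ) := by linarith
    have hper : perim (K n) = 4 * (n:ℝ) + 2 := by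
      rw [hK n]
      unfold perim
      rw [perim_rect hab, show ((n:ℝ) - -(n:ℝ)) = 2 * n by ring,
        show (1:ENNReal) = ENNReal.ofReal 1 from ENNReal.ofReal_one.symm,
        ← ENNReal.ofReal_add (by positivity) (by norm_num),
        ← ENNReal.ofReal_add (by positivity) (by norm_num),
        ← ENNReal.ofReal_add (by positivity) (by positivity),
        ENNReal.toReal_ofReal (by positivity)]
      ring
    have hcir : circum (K n) = Real.sqrt (4 * (n:ℝ) ^ 2 + 1) / 2 := by
      rw [hK n]
      exact circum_rect (by positivity)
    rw [hper, hcir]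
    ring
  refine ⟨hLF, key, ?_⟩
  have hl : Tendsto (fun n : ℕ => 2 - 1 / (n:ℝ)) atTop (𝓝 2) := by
    have h2 : Tendsto (fun _ : ℕ => (2:ℝ)) atTop (𝓝 2) := tendsto_const_nhds
    have h0 := tendsto_one_div_atTop_nhds_zero_nat (𝕜 := ℝ)
    simpa using h2.sub h0
  refine tendsto_of_tendsto_of_tendsto_of_le_of_le' hl tendsto_const_nhds ?_ ?_
  · filter_upwards [eventually_ge_atTop 1] with n hn
    rw [key n hn]
    have hn1 : (1:ℝ) ≤ (n:ℝ) := by exact_mod_cast hn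
    have hnpos : (0:ℝ) < n := by linarith
    have hs : Real.sqrt (4 * (n:ℝ) ^ 2 + 1) ≤ 2 * n + 1 / (2 * n) := by
      rw [show (2 * (n:ℝ) + 1 / (2 * n)) = Real.sqrt ((2 * n + 1 / (2 * n)) ^ 2) from
        (Real.sqrt_sq (by positivity)).symm]
      apply Real.sqrt_le_sqrt
      have h1 : (2 * (n:ℝ) + 1 / (2 * n)) ^ 2 = 4 * n ^ 2 + 2 + (1 / (2 * n)) ^ 2 := by
        field_simp
        ring
      rw [h1]
      nlinarith [sq_nonneg (1 / (2 * (n:ℝ)))]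
    have : 2 * (1 / (2 * (n:ℝ))) = 1 / n := by
      field_simp
    linarith
  · filter_upwards [eventually_ge_atTop 1] with n hn
    rw [key n hn]
    have hn1 : (1:ℝ) ≤ (n:ℝ) := by exact_mod_cast hn
    have hs : 2 * (n:ℝ) ≤ Real.sqrt (4 * (n:ℝ) ^ 2 + 1) := by
      rw [show (2 * (n:ℝ)) = Real.sqrt ((2 * n) ^ 2) from (Real.sqrt_sq (by positivity)).symm]
      apply Real.sqrt_le_sqrt
      nlinarith
    linarith
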